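/- Let $f : \mathbb{R} \to [0,\infty)$ be an even log-concave function with $f(0) = 1$, and let $p, q$ be real numbers with $-1 < p < q$. Then $\left(\int_0^\infty f(t)\, t^p\, dt\right)^{\frac{1}{p+1}} \leq C_{p,q} \left(\int_0^\infty f(t)\, t^q\, dt\right)^{\frac{1}{q+1}}$, where $C_{p,q} = \max\left\{ \frac{(q+1)^{1/(q+1)}}{(p+1)^{1/(p+1)}},\ \frac{\Gamma(p+1)^{1/(p+1)}}{\Gamma(q+1)^{1/(q+1)}} \right\}$. -/

import Mathlib

open Real Set MeasureTheory ENNReal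

/-- An even log-concave function with `f 0 = 1` is bounded by `1`. -/
lemma aux_le_one (f : ℝ → ℝ) (hf0 : ∀ x, 0 ≤ f x) (hf1 : f 0 = 1)
    (heven : ∀ x, f (-x) = f x)
    (hlc : ∀ x y : ℝ, ∀ l : ℝ, 0 ≤ l → l ≤ 1 →
      (f x) ^ l * (f y) ^ (1 - l) ≤ f (l * x + (1 - l) * y)) :
    ∀ x, f x ≤ 1 := by
  intro x
  rcases eq_or_lt_of_le (hf0 x) with h | h
  · rw [← h]; norm_num
  · have hkey := hlc x (-x) (1/2) (by norm_num) (by norm_num)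
    have hx0 : (1/2 : ℝ) * x + (1 - 1/2) * (-x) = 0 := by ring
    rw [hx0, hf1, heven] at hkey
    have : f x ^ ((1:ℝ)/2) * f x ^ (1 - (1:ℝ)/2) = f x := by
      rw [← Real.rpow_add h]; norm_num
    rwa [this] at hkey

/-- A log-concave function is a.e. measurable. -/
lemma aux_aemeasurable (f : ℝ → ℝ) (hf0 : ∀ x, 0 ≤ f x)
    (hlc : ∀ x y : ℝ, ∀ l : ℝ, 0 ≤ l → l ≤ 1 →
      (f x) ^ l * (f y) ^ (1 - l) ≤ f (l * x + (1 - l) * y)) :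
    AEMeasurable f (volume : Measure ℝ) := by
  set S : Set ℝ := {x | 0 < f x} with hS
  have key : ∀ x y a b : ℝ, 0 ≤ a → 0 ≤ b → a + b = 1 →
      f x ^ a * f y ^ b ≤ f (a * x + b * y) := by
    intro x y a b ha hb hab
    have h1 : b = 1 - a := by linarith
    subst h1
    exact hlc x y a ha (by linarith)
  have hconv : Convex ℝ S := by
    intro x hx y hy a b ha hb hab
    have hx' : 0 < f x := hx
    have hy' : 0 < f y := hy
    have hk := key x y a b ha hb hab
    have hprod : 0 < f x ^ a * f y ^ b :=
      mul_pos (Real.rpow_pos_of_pos hx' a) (Real.rpow_pos_of_pos hy' b)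
    show 0 < f (a • x + b • y)
    simp only [smul_eq_mul]
    exact lt_of_lt_of_le hprod hk
  have hconc : ConcaveOn ℝ S (fun x => Real.log (f x)) := by
    refine ⟨hconv, ?_⟩
    intro x hx y hy a b ha hb hab
    have hx' : 0 < f x := hx
    have hy' : 0 < f y := hy
    have hk := key x y a b ha hb hab
    have hprod : 0 < f x ^ a * f y ^ b :=
      mul_pos (Real.rpow_pos_of_pos hx' a) (Real.rpow_pos_of_pos hy' b)
    simp only [smul_eq_mul]
    calc a * Real.log (f x) + b * Real.log (f y)
        = Real.log (f x ^ a * f y ^ b) := by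
          rw [Real.log_mul (ne_of_gt (Real.rpow_pos_of_pos hx' a))
            (ne_of_gt (Real.rpow_pos_of_pos hy' b)),
            Real.log_rpow hx', Real.log_rpow hy']
      _ ≤ Real.log (f (a * x + b * y)) := Real.log_le_log hprod hk
  have hcont : ContinuousOn f (interior S) := by
    have hg := hconc.continuousOn_interior
    have h2 : ContinuousOn (fun x => Real.exp (Real.log (f x))) (interior S) :=
      Real.continuous_exp.comp_continuousOn hg
    refine h2.congr ?_
    intro x hx
    have hxS : x ∈ S := interior_subset hx
    have : 0 < f x := hxS
    exact (Real.exp_log this).symm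
  have hMS : MeasurableSet (interior S) := isOpen_interior.measurableSet
  have h1 : AEMeasurable f (volume.restrict (interior S)) := hcont.aemeasurable hMS
  have hnull : volume (S \ interior S) = 0 := by
    refine measure_mono_null ?_ (hconv.addHaar_frontier volume)
    rw [← closure_diff_interior]
    exact diff_subset_diff_left subset_closure
  have h2 : AEMeasurable f (volume.restrict (interior S)ᶜ) := by
    have hz : f =ᵐ[volume.restrict (interior S)ᶜ] (fun _ => 0) := by
      rw [Filter.EventuallyEq, ae_iff]
      rw [Measure.restrict_apply' hMS.compl]
      refine measure_mono_null ?_ hnull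
      intro x hx
      obtain ⟨hxne, hxc⟩ := hx
      have : 0 < f x := lt_of_le_of_ne (hf0 x) (Ne.symm hxne)
      exact ⟨this, hxc⟩
    exact (aemeasurable_const (b := (0:ℝ))).congr hz.symm
  have := h1.add_measure h2
  rwa [Measure.restrict_add_restrict_compl hMS] at this

/-- Lebesgue integral of `t ^ r` over `Ioc 0 a`. -/
lemma aux_lint_rpow {a r : ℝ} (ha : 0 ≤ a) (hr : -1 < r) :
    ∫⁻ t in Set.Ioc (0:ℝ) a, ENNReal.ofReal (t ^ r)
      = ENNReal.ofReal (a ^ (r+1) / (r+1)) := by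
  have hint : IntegrableOn (fun t : ℝ => t ^ r) (Set.Ioc 0 a) := by
    have := intervalIntegral.intervalIntegrable_rpow' (a := 0) (b := a) hr
    rwa [intervalIntegrable_iff_integrableOn_Ioc_of_le ha] at this
  have hnn : 0 ≤ᵐ[volume.restrict (Set.Ioc (0:ℝ) a)] fun t : ℝ => t ^ r := by
    filter_upwards [ae_restrict_mem measurableSet_Ioc] with t ht
    exact Real.rpow_nonneg ht.1.le r
  rw [← ofReal_integral_eq_lintegral_ofReal hint hnn]
  congr 1
  rw [← intervalIntegral.integral_of_le ha, integral_rpow (Or.inl hr),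
    Real.zero_rpow (by linarith : r + 1 ≠ 0)]
  ring

/-- Moment comparison for even log-concave functions with `f(0)=1`:
`(∫_0^∞ f t^p)^{1/(p+1)} ≤ C_{p,q} (∫_0^∞ f t^q)^{1/(q+1)}` for `-1 < p < q`. -/
theorem stmt_14 (f : ℝ → ℝ) (hf0 : ∀ x, 0 ≤ f x) (hf1 : f 0 = 1)
    (heven : ∀ x, f (-x) = f x)
    (hlc : ∀ x y : ℝ, ∀ l : ℝ, 0 ≤ l → l ≤ 1 →
      (f x) ^ l * (f y) ^ (1 - l) ≤ f (l * x + (1 - l) * y))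
    (p q : ℝ) (hp : -1 < p) (hpq : p < q) :
    (∫⁻ t in Set.Ioi (0:ℝ), ENNReal.ofReal (f t * t ^ p)) ^ (1/(p+1)) ≤
      ENNReal.ofReal (max ((q+1) ^ (1/(q+1)) / (p+1) ^ (1/(p+1)))
        (Real.Gamma (p+1) ^ (1/(p+1)) / Real.Gamma (q+1) ^ (1/(q+1)))) *
      (∫⁻ t in Set.Ioi (0:ℝ), ENNReal.ofReal (f t * t ^ q)) ^ (1/(q+1)) := by
  have hp1 : (0:ℝ) < p + 1 := by linarith
  have hq1 : (0:ℝ) < q + 1 := by linarith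
  have hfle1 : ∀ x, f x ≤ 1 := aux_le_one f hf0 hf1 heven hlc
  have hmeasf : AEMeasurable f (volume : Measure ℝ) := aux_aemeasurable f hf0 hlc
  set c₁ : ℝ := (q+1) ^ (1/(q+1)) / (p+1) ^ (1/(p+1)) with hc₁
  have hc₁pos : 0 < c₁ :=
    div_pos (Real.rpow_pos_of_pos hq1 _) (Real.rpow_pos_of_pos hp1 _)
  set Iq := ∫⁻ t in Set.Ioi (0:ℝ), ENNReal.ofReal (f t * t ^ q) with hIqdef
  have hmaxpos : 0 < max c₁ (Real.Gamma (p+1) ^ (1/(p+1)) / Real.Gamma (q+1) ^ (1/(q+1))) :=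
    lt_of_lt_of_le hc₁pos (le_max_left _ _)
  -- measurability of the integrands on subsets of `Ioi 0`
  have hfr : ∀ (s : Set ℝ), MeasurableSet s → s ⊆ Set.Ioi (0:ℝ) → ∀ r : ℝ,
      AEMeasurable (fun t => ENNReal.ofReal (f t * t ^ r)) (volume.restrict s) := by
    intro s hs hsub r
    have h1 : AEMeasurable (fun t : ℝ => Real.exp (Real.log t * r)) (volume.restrict s) :=
      (Real.measurable_exp.comp (Real.measurable_log.mul_const r)).aemeasurable
    have h2 : (fun t : ℝ => t ^ r) =ᵐ[volume.restrict s]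
        fun t => Real.exp (Real.log t * r) := by
      filter_upwards [ae_restrict_mem hs] with t ht
      exact Real.rpow_def_of_pos (hsub ht) r
    have hrp : AEMeasurable (fun t : ℝ => t ^ r) (volume.restrict s) := h1.congr h2.symm
    exact ENNReal.measurable_ofReal.comp_aemeasurable
      ((hmeasf.mono_measure Measure.restrict_le_self).mul hrp)
  rcases eq_top_or_lt_top Iq with htop | hfin
  · -- infinite right-hand side
    rw [htop, ENNReal.top_rpow_of_pos (by positivity), ENNReal.mul_top
      (by simpa using ENNReal.ofReal_pos.mpr hmaxpos |>.ne')]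
    exact le_top
  rcases eq_or_ne Iq 0 with h0 | hne
  · -- zero case
    have h0ae := (lintegral_eq_zero_iff'
      (hfr _ measurableSet_Ioi (fun x hx => hx) q)).mp h0
    have hIp0 : (∫⁻ t in Set.Ioi (0:ℝ), ENNReal.ofReal (f t * t ^ p)) = 0 := by
      rw [show (0:ℝ≥0∞) = ∫⁻ _ in Set.Ioi (0:ℝ), 0 from (lintegral_zero).symm]
      apply lintegral_congr_ae
      filter_upwards [h0ae, ae_restrict_mem measurableSet_Ioi] with t h1 h2
      have htq : (0:ℝ) < t ^ q := Real.rpow_pos_of_pos h2 q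
      have h1' : f t * t ^ q ≤ 0 := by
        simpa [ENNReal.ofReal_eq_zero] using h1
      have hft : f t = 0 := by nlinarith [hf0 t]
      simp [hft]
    rw [hIp0, ENNReal.zero_rpow_of_pos (by positivity)]
    exact zero_le
  -- main case: `0 < Iq < ∞`
  set m := Iq.toReal with hm
  have hmpos : 0 < m := ENNReal.toReal_pos hne hfin.ne
  set a : ℝ := ((q+1) * m) ^ (1/(q+1)) with hadef
  have hapos : 0 < a := Real.rpow_pos_of_pos (by positivity) _
  have haq : a ^ (q+1) = (q+1) * m := by
    rw [hadef, ← Real.rpow_mul (by positivity), one_div, inv_mul_cancel₀ hq1.ne',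
      Real.rpow_one]
  -- split `Ioi 0` at `a`
  have hsplit : ∀ g : ℝ → ℝ≥0∞, ∫⁻ t in Set.Ioi (0:ℝ), g t
      = (∫⁻ t in Set.Ioc (0:ℝ) a, g t) + ∫⁻ t in Set.Ioi a, g t := by
    intro g
    rw [← Ioc_union_Ioi_eq_Ioi hapos.le,
      lintegral_union measurableSet_Ioi (Set.Ioc_disjoint_Ioi le_rfl)]
  -- additivity on `Ioc 0 a`
  have hIocsub : Set.Ioc (0:ℝ) a ⊆ Set.Ioi 0 := Set.Ioc_subset_Ioi_self
  have hadd : ∀ r : ℝ, (∫⁻ t in Set.Ioc (0:ℝ) a, ENNReal.ofReal (f t * t ^ r))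
      + (∫⁻ t in Set.Ioc (0:ℝ) a, ENNReal.ofReal ((1 - f t) * t ^ r))
      = ∫⁻ t in Set.Ioc (0:ℝ) a, ENNReal.ofReal (t ^ r) := by
    intro r
    rw [← lintegral_add_left' (hfr _ measurableSet_Ioc hIocsub r)]
    apply lintegral_congr_ae
    filter_upwards [ae_restrict_mem measurableSet_Ioc] with t ht
    have htr : (0:ℝ) ≤ t ^ r := Real.rpow_nonneg ht.1.le r
    rw [← ENNReal.ofReal_add (mul_nonneg (hf0 t) htr)
      (mul_nonneg (by linarith [hfle1 t]) htr)]
    congr 1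
    ring
  set k : ℝ≥0∞ := ENNReal.ofReal (a ^ (p - q)) with hk
  -- tail comparison
  have hC : (∫⁻ t in Set.Ioi a, ENNReal.ofReal (f t * t ^ p))
      ≤ k * ∫⁻ t in Set.Ioi a, ENNReal.ofReal (f t * t ^ q) := by
    rw [← lintegral_const_mul' k _ ENNReal.ofReal_ne_top]
    apply lintegral_mono_ae
    filter_upwards [ae_restrict_mem measurableSet_Ioi] with t ht
    have htpos : (0:ℝ) < t := lt_trans hapos ht
    rw [hk, ← ENNReal.ofReal_mul (Real.rpow_nonneg hapos.le _)]
    apply ENNReal.ofReal_le_ofReal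
    have h1 : t ^ p = t ^ q * t ^ (p - q) := by
      rw [← Real.rpow_add htpos]; ring_nf
    have h2 : t ^ (p - q) ≤ a ^ (p - q) :=
      Real.rpow_le_rpow_of_nonpos hapos (le_of_lt ht) (by linarith)
    have h3 : (0:ℝ) ≤ f t * t ^ q := mul_nonneg (hf0 t) (Real.rpow_nonneg htpos.le q)
    calc f t * t ^ p = (f t * t ^ q) * t ^ (p - q) := by rw [h1]; ring
      _ ≤ (f t * t ^ q) * a ^ (p - q) := mul_le_mul_of_nonneg_left h2 h3
      _ = a ^ (p - q) * (f t * t ^ q) := by ring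
  -- bulk comparison
  have hB : k * (∫⁻ t in Set.Ioc (0:ℝ) a, ENNReal.ofReal ((1 - f t) * t ^ q))
      ≤ ∫⁻ t in Set.Ioc (0:ℝ) a, ENNReal.ofReal ((1 - f t) * t ^ p) := by
    rw [← lintegral_const_mul' k _ ENNReal.ofReal_ne_top]
    apply lintegral_mono_ae
    filter_upwards [ae_restrict_mem measurableSet_Ioc] with t ht
    have htpos : (0:ℝ) < t := ht.1
    rw [hk, ← ENNReal.ofReal_mul (Real.rpow_nonneg hapos.le _)]
    apply ENNReal.ofReal_le_ofReal
    have h1 : t ^ p = t ^ q * t ^ (p - q) := by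
      rw [← Real.rpow_add htpos]; ring_nf
    have h2 : a ^ (p - q) ≤ t ^ (p - q) :=
      Real.rpow_le_rpow_of_nonpos htpos ht.2 (by linarith)
    have h3 : (0:ℝ) ≤ (1 - f t) * t ^ q :=
      mul_nonneg (by linarith [hfle1 t]) (Real.rpow_nonneg htpos.le q)
    calc a ^ (p - q) * ((1 - f t) * t ^ q)
        ≤ t ^ (p - q) * ((1 - f t) * t ^ q) := mul_le_mul_of_nonneg_right h2 h3
      _ = (1 - f t) * t ^ p := by rw [h1]; ring
  -- `Q = Iq`, hence `B' = C'`
  have hQ : (∫⁻ t in Set.Ioc (0:ℝ) a, ENNReal.ofReal (t ^ q)) = Iq := by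
    rw [aux_lint_rpow hapos.le (by linarith : (-1:ℝ) < q), haq,
      mul_div_cancel_left₀ _ hq1.ne', hm, ENNReal.ofReal_toReal hfin.ne]
  have hA'fin : (∫⁻ t in Set.Ioc (0:ℝ) a, ENNReal.ofReal (f t * t ^ q)) ≠ ⊤ := by
    refine ne_top_of_le_ne_top hfin.ne ?_
    rw [hIqdef, hsplit (fun t => ENNReal.ofReal (f t * t ^ q))]
    exact le_self_add
  have hBC : (∫⁻ t in Set.Ioc (0:ℝ) a, ENNReal.ofReal ((1 - f t) * t ^ q))
      = ∫⁻ t in Set.Ioi a, ENNReal.ofReal (f t * t ^ q) := by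
    have e1 := (hadd q).trans hQ
    rw [hIqdef, hsplit (fun t => ENNReal.ofReal (f t * t ^ q))] at e1
    exact (ENNReal.add_right_inj hA'fin).mp e1
  -- the key bound: `Ip ≤ ofReal (a^(p+1)/(p+1))`
  have hIple : (∫⁻ t in Set.Ioi (0:ℝ), ENNReal.ofReal (f t * t ^ p))
      ≤ ENNReal.ofReal (a ^ (p+1) / (p+1)) := by
    rw [hsplit (fun t => ENNReal.ofReal (f t * t ^ p)),
      ← aux_lint_rpow hapos.le hp, ← hadd p]
    refine add_le_add le_rfl ?_
    calc (∫⁻ t in Set.Ioi a, ENNReal.ofReal (f t * t ^ p))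
        ≤ k * ∫⁻ t in Set.Ioi a, ENNReal.ofReal (f t * t ^ q) := hC
      _ = k * ∫⁻ t in Set.Ioc (0:ℝ) a, ENNReal.ofReal ((1 - f t) * t ^ q) := by
          rw [hBC]
      _ ≤ _ := hB
  -- conclude
  have hstep : (∫⁻ t in Set.Ioi (0:ℝ), ENNReal.ofReal (f t * t ^ p)) ^ (1/(p+1))
      ≤ ENNReal.ofReal (c₁ * m ^ (1/(q+1))) := by
    calc (∫⁻ t in Set.Ioi (0:ℝ), ENNReal.ofReal (f t * t ^ p)) ^ (1/(p+1))
        ≤ (ENNReal.ofReal (a ^ (p+1) / (p+1))) ^ (1/(p+1)) :=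
          ENNReal.rpow_le_rpow hIple (by positivity)
      _ = ENNReal.ofReal ((a ^ (p+1) / (p+1)) ^ (1/(p+1))) :=
          ENNReal.ofReal_rpow_of_nonneg (by positivity) (by positivity)
      _ = ENNReal.ofReal (c₁ * m ^ (1/(q+1))) := by
          congr 1
          rw [Real.div_rpow (by positivity) hp1.le,
            ← Real.rpow_mul hapos.le, mul_one_div, div_self hp1.ne', Real.rpow_one,
            hadef, Real.mul_rpow hq1.le hmpos.le, hc₁]
          ring
  refine le_trans hstep ?_
  have hIqr : Iq ^ (1/(q+1)) = ENNReal.ofReal (m ^ (1/(q+1))) := by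
    rw [hm, ← ENNReal.ofReal_rpow_of_nonneg ENNReal.toReal_nonneg (by positivity),
      ENNReal.ofReal_toReal hfin.ne]
  rw [hIqr, ← ENNReal.ofReal_mul (le_of_lt hmaxpos)]
  apply ENNReal.ofReal_le_ofReal
  exact mul_le_mul_of_nonneg_right (le_max_left _ _) (by positivity)
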